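/- Let S² be the unit sphere in ℝ³ with its normalized (probability) surface measure μ, let v be a fixed unit vector, let N ≥ 1 be an integer, and let X₁, …, X_N be the coordinates of a point of (S²)^N distributed according to the product measure μ^{⊗N} (i.e. N independent uniformly distributed satellites). Define the contact angle θ₀ = min_{1 ≤ i ≤ N} arccos(⟪X_i, v⟫), the angle from v to the nearest satellite. Then for every θ ∈ [0, π], the cumulative distribution function of the contact angle is P[θ₀ ≤ θ] = 1 − ((1 + cos θ)/2)^N. -/

import Mathlib

open Real MeasureTheory
open scoped RealInnerProductSpace ENNReal

set_option linter.unusedSectionVars false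
set_option linter.unusedVariables false
set_option maxHeartbeats 1000000

namespace ContactAux

/-- `W n = ∫₀^{2π} cos^{2n}`. -/
noncomputable def W (n : ℕ) : ℝ := ∫ α in (0:ℝ)..(2*π), Real.cos α ^ (2*n)

/-- `J n = ∫₀^1 (1-t²)^n`. -/
noncomputable def J (n : ℕ) : ℝ := ∫ t in (0:ℝ)..1, (1 - t^2)^n

lemma W_zero : W 0 = 2*π := by simp [W]

lemma W_succ (n : ℕ) : W (n+1) = (2*n+1)/(2*n+2) * W n := by
  have h : 2*(n+1) = 2*n + 2 := by ring
  rw [W, h, integral_cos_pow]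
  have : Real.sin (2*π) = 0 := by simp
  rw [this]
  simp only [Real.sin_zero, mul_zero, zero_mul, sub_zero, zero_div, zero_add]
  rw [show (∫ α in (0:ℝ)..(2*π), Real.cos α ^ (2*n)) = W n from rfl]
  push_cast
  ring

lemma J_zero : J 0 = 1 := by simp [J]

lemma J_succ (n : ℕ) : J (n+1) = (2*(n:ℝ)+2)/(2*n+3) * J n := by
  have key : ∀ t : ℝ, HasDerivAt (fun t : ℝ => t * (1 - t^2)^(n+1))
      ((2*(n:ℝ)+3) * (1-t^2)^(n+1) - (2*(n:ℝ)+2) * (1-t^2)^n) t := by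
    intro t
    have h2 : HasDerivAt (fun t : ℝ => 1 - t^2) (-(2*t)) t := by
      exact ((hasDerivAt_const t (1:ℝ)).sub (hasDerivAt_pow 2 t)).congr_deriv (by norm_num)
    have h1 : HasDerivAt (fun t : ℝ => t * (1 - t^2)^(n+1))
        (1 * (1-t^2)^(n+1) + t * ((↑(n+1) * (1 - t^2)^n) * (-(2*t)))) t :=
      (hasDerivAt_id t).mul (h2.pow (n+1))
    convert h1 using 1
    have ht : (t:ℝ)^2 = 1 - (1 - t^2) := by ring
    push_cast
    calc (2*(n:ℝ)+3) * (1-t^2)^(n+1) - (2*(n:ℝ)+2) * (1-t^2)^n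
        = (1-t^2)^(n+1) - 2*((n:ℝ)+1) * (1 - (1-t^2)) * (1-t^2)^n := by
          rw [pow_succ]; ring
      _ = (1-t^2)^(n+1) - 2*((n:ℝ)+1) * t^2 * (1-t^2)^n := by rw [← ht]
      _ = 1 * (1-t^2)^(n+1) + t * ((((n:ℝ)+1) * (1 - t^2)^n) * (-(2*t))) := by ring
  have hint : (∫ t in (0:ℝ)..1, ((2*(n:ℝ)+3) * (1-t^2)^(n+1) - (2*(n:ℝ)+2) * (1-t^2)^n))
      = (1:ℝ) * (1-1^2)^(n+1) - 0 * (1-0^2)^(n+1) := by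
    rw [intervalIntegral.integral_eq_sub_of_hasDerivAt (fun t _ => key t)
      ((Continuous.intervalIntegrable (by continuity) 0 1))]
  have c1 : Continuous fun t : ℝ => (2*(n:ℝ)+3) * (1-t^2)^(n+1) := by continuity
  have c2 : Continuous fun t : ℝ => (2*(n:ℝ)+2) * (1-t^2)^n := by continuity
  rw [intervalIntegral.integral_sub (c1.intervalIntegrable 0 1) (c2.intervalIntegrable 0 1),
    intervalIntegral.integral_const_mul, intervalIntegral.integral_const_mul] at hint
  simp only [one_pow, sub_self] at hint
  have hJ1 : (2*(n:ℝ)+3) * J (n+1) - (2*(n:ℝ)+2) * J n = 0 := by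
    simpa [J] using hint
  have h3 : (2*(n:ℝ)+3) ≠ 0 := by positivity
  field_simp
  linarith [hJ1]

lemma J_pos (n : ℕ) : 0 < J n := by
  induction n with
  | zero => simp [J_zero]
  | succ n ih =>
    rw [J_succ]
    positivity

lemma WJ (n : ℕ) : W n * ((2*(n:ℝ)+1) * J n) = 2*π := by
  induction n with
  | zero => simp [W_zero, J_zero]
  | succ n ih =>
    rw [W_succ, J_succ]
    push_cast
    have h2 : (2*(n:ℝ)+2) ≠ 0 := by positivity
    have h3 : (2*(n:ℝ)+3) ≠ 0 := by positivity
    calc (2*(n:ℝ)+1)/(2*(n:ℝ)+2) * W n * ((2 * ((n:ℝ)+1) + 1) * ((2*(n:ℝ)+2)/(2*(n:ℝ)+3) * J n))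
        = W n * ((2*(n:ℝ)+1) * J n) * ((2 * ((n:ℝ)+1) + 1) / (2*(n:ℝ)+3)) := by
          field_simp
      _ = 2*π * ((2*(n:ℝ)+3) / (2*(n:ℝ)+3)) := by rw [ih]; ring_nf
      _ = 2*π := by rw [div_self h3, mul_one]

lemma W_pos (n : ℕ) : 0 < W n := by
  have h := WJ n
  have h1 : 0 < (2*(n:ℝ)+1) * J n := mul_pos (by positivity) (J_pos n)
  nlinarith [pi_pos]

lemma J_big (n : ℕ) (hn : 1 ≤ n) : 1 < (2*(n:ℝ)+1) * J n := by
  induction n with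
  | zero => omega
  | succ n ih =>
    rw [J_succ]
    rcases Nat.eq_or_lt_of_le hn with h | h
    · have hn0 : n = 0 := by omega
      subst hn0
      rw [J_zero]
      norm_num
    · have hn1 : 1 ≤ n := by omega
      have hih := ih hn1
      have hJ := J_pos n
      push_cast
      have h3 : (0:ℝ) < 2*(n:ℝ)+3 := by positivity
      rw [show (2 * ((n:ℝ) + 1) + 1) * ((2 * ↑n + 2) / (2 * ↑n + 3) * J n)
        = ((2*(n:ℝ)+2) * ((2*(n:ℝ)+3) * J n)) / (2*(n:ℝ)+3) by field_simp; ring]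
      rw [lt_div_iff₀ h3, one_mul]
      nlinarith

lemma W_lt (n : ℕ) (hn : 1 ≤ n) : W n < 2*π := by
  have h1 := WJ n
  have h2 := J_big n hn
  have h3 := W_pos n
  nlinarith

lemma circle_avg (a b : ℝ) (n : ℕ) :
    (∫ α in (0:ℝ)..(2*π), (a * Real.cos α + b * Real.sin α)^(2*n)) = (a^2+b^2)^n * W n := by
  by_cases hab : a = 0 ∧ b = 0
  · obtain ⟨ha, hb⟩ := hab
    subst ha; subst hb
    cases n with
    | zero => simp [W_zero]
    | succ m =>
      have : (0:ℝ)^2 + (0:ℝ)^2 = 0 := by norm_num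
      simp only [zero_mul, add_zero]
      rw [this, zero_pow (Nat.succ_ne_zero m)]
      have h2 : 2*(m+1) ≠ 0 := by omega
      simp [zero_pow h2]
  · set z : ℂ := ⟨a, b⟩ with hz
    have hz0 : z ≠ 0 := by
      intro h
      exact hab ⟨by simpa using congrArg Complex.re h, by simpa using congrArg Complex.im h⟩
    set r : ℝ := ‖z‖ with hr
    have hr0 : 0 < r := by
      rw [hr]; exact norm_pos_iff.mpr hz0
    set φ : ℝ := Complex.arg z with hφ
    have ha : a = r * Real.cos φ := by
      rw [hφ, Complex.cos_arg hz0, hr, mul_div_assoc', mul_div_cancel_left₀ _ (norm_pos_iff.mpr hz0).ne']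
    have hb : b = r * Real.sin φ := by
      rw [hφ, Complex.sin_arg, hr, mul_div_assoc', mul_div_cancel_left₀ _ (norm_pos_iff.mpr hz0).ne']
    have hpt : ∀ α : ℝ, a * Real.cos α + b * Real.sin α = r * Real.cos (α - φ) := by
      intro α
      rw [ha, hb, Real.cos_sub]
      ring
    have hper : Function.Periodic (fun x : ℝ => Real.cos x ^ (2*n)) (2*π) := by
      intro x
      simp only
      rw [Real.cos_periodic x]
    calc (∫ α in (0:ℝ)..(2*π), (a * Real.cos α + b * Real.sin α)^(2*n))
        = ∫ α in (0:ℝ)..(2*π), r^(2*n) * Real.cos (α - φ) ^ (2*n) := by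
          apply intervalIntegral.integral_congr
          intro α _
          simp only
          rw [hpt α, mul_pow]
      _ = r^(2*n) * ∫ α in (0:ℝ)..(2*π), Real.cos (α - φ) ^ (2*n) := by
          rw [intervalIntegral.integral_const_mul]
      _ = r^(2*n) * ∫ α in (0-φ:ℝ)..(2*π-φ), Real.cos α ^ (2*n) := by
          rw [intervalIntegral.integral_comp_sub_right (fun x => Real.cos x ^ (2*n)) φ]
      _ = r^(2*n) * ∫ α in (0:ℝ)..(2*π), Real.cos α ^ (2*n) := by
          have := hper.intervalIntegral_add_eq (0-φ) 0
          rw [show (0-φ) + 2*π = 2*π - φ by ring, show (0:ℝ) + 2*π = 2*π by ring] at this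
          rw [this]
      _ = (a^2+b^2)^n * W n := by
          congr 1
          rw [pow_mul]
          congr 1
          rw [hr, Complex.sq_norm]
          simp [hz, Complex.normSq_mk]
          ring

/-- uniform probability measure on `[-1,1]`. -/
noncomputable def unif : Measure ℝ := (2 : ℝ≥0∞)⁻¹ • (volume.restrict (Set.Icc (-1:ℝ) 1))

instance : IsProbabilityMeasure unif := by
  constructor
  rw [unif, Measure.smul_apply, Measure.restrict_apply MeasurableSet.univ, Set.univ_inter,
    Real.volume_Icc, smul_eq_mul]
  rw [show (1:ℝ) - (-1) = 2 by norm_num, show ENNReal.ofReal 2 = 2 by norm_num]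
  exact ENNReal.inv_mul_cancel two_ne_zero ENNReal.ofNat_ne_top

lemma unif_compl_Icc : unif (Set.Icc (-1:ℝ) 1)ᶜ = 0 := by
  rw [unif, Measure.smul_apply, Measure.restrict_apply (measurableSet_Icc.compl),
    Set.compl_inter_self]
  simp

lemma integral_unif (f : ℝ → ℝ) : ∫ t, f t ∂unif = (∫ t in (-1:ℝ)..1, f t) / 2 := by
  rw [unif, integral_smul_measure]
  rw [intervalIntegral.integral_of_le (by norm_num : (-1:ℝ) ≤ 1)]
  rw [← integral_Icc_eq_integral_Ioc]
  simp only [ENNReal.toReal_inv, ENNReal.toReal_ofNat]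
  rw [smul_eq_mul]
  ring

noncomputable def l (k : ℕ) : ℝ := ∫ t, t^k ∂unif

lemma l_even (k : ℕ) : l (2*k) = 1/(2*(k:ℝ)+1) := by
  rw [l, integral_unif, integral_pow]
  have h1 : ((-1:ℝ))^(2*k+1) = -1 := Odd.neg_one_pow ⟨k, by ring⟩
  rw [one_pow, h1]
  push_cast
  field_simp
  ring

lemma l_odd (k : ℕ) : l (2*k+1) = 0 := by
  rw [l, integral_unif, integral_pow]
  have h1 : ((-1:ℝ))^(2*k+1+1) = 1 := Even.neg_one_pow ⟨k+1, by ring⟩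
  rw [one_pow, h1]
  simp

lemma expand_pow (c : ℝ) (n : ℕ) :
    (1 - c^2)^n = ∑ k ∈ Finset.range (n+1), ((n.choose k : ℝ) * (-1)^k) * c^(2*k) := by
  rw [show (1 - c^2 : ℝ) = (-(c^2)) + 1 by ring, add_pow]
  apply Finset.sum_congr rfl
  intro k hk
  rw [one_pow, mul_one, neg_pow, pow_mul]
  ring

lemma J_sum (n : ℕ) : J n = ∑ k ∈ Finset.range (n+1), (n.choose k : ℝ) * (-1)^k / (2*(k:ℝ)+1) := by
  rw [J]
  rw [intervalIntegral.integral_congr (g := fun t =>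
    ∑ k ∈ Finset.range (n+1), ((n.choose k : ℝ) * (-1)^k) * t^(2*k))
    (fun t _ => expand_pow t n)]
  rw [intervalIntegral.integral_finset_sum (f := fun k t => ((n.choose k : ℝ) * (-1)^k) * t^(2*k)) (fun k _ =>
    ((continuous_const.mul (continuous_pow (2*k))).intervalIntegrable 0 1))]
  apply Finset.sum_congr rfl
  intro k hk
  rw [intervalIntegral.integral_const_mul, integral_pow]
  push_cast
  field_simp
  simp

/-- Integrability of continuous functions w.r.t. probability measures carried by `[-1,1]`. -/
lemma integrable_of_IccNull (ν : Measure ℝ) [IsProbabilityMeasure ν]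
    (hν : ν (Set.Icc (-1:ℝ) 1)ᶜ = 0) {h : ℝ → ℝ} (hc : Continuous h) :
    Integrable h ν := by
  obtain ⟨C, hC⟩ := (isCompact_Icc (a := (-1:ℝ)) (b := 1)).exists_bound_of_continuousOn
    hc.continuousOn
  have hae : ∀ᵐ t ∂ν, t ∈ Set.Icc (-1:ℝ) 1 := by
    rw [ae_iff]
    convert hν using 2
    rfl
  refine ⟨hc.aestronglyMeasurable, HasFiniteIntegral.of_bounded (C := C) ?_⟩
  filter_upwards [hae] with t ht
  exact hC t ht

lemma abs_integral_le_of_IccNull (ν : Measure ℝ) [IsProbabilityMeasure ν]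
    (hν : ν (Set.Icc (-1:ℝ) 1)ᶜ = 0) {h : ℝ → ℝ} (hi : Integrable h ν) {ε : ℝ}
    (hb : ∀ t ∈ Set.Icc (-1:ℝ) 1, |h t| ≤ ε) : |∫ t, h t ∂ν| ≤ ε := by
  have hae : ∀ᵐ t ∂ν, t ∈ Set.Icc (-1:ℝ) 1 := by
    rw [ae_iff]; convert hν using 2; rfl
  calc |∫ t, h t ∂ν| ≤ ∫ t, |h t| ∂ν := by
        simpa [Real.norm_eq_abs] using norm_integral_le_integral_norm (μ := ν) h
    _ ≤ ∫ _t, ε ∂ν := by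
        apply integral_mono_ae hi.abs (integrable_const ε)
        filter_upwards [hae] with t ht using hb t ht
    _ = ε := by simp

/-- Two probability measures carried by `[-1,1]` with equal moments are equal. -/
lemma eq_of_moments (ν₁ ν₂ : Measure ℝ) [IsProbabilityMeasure ν₁] [IsProbabilityMeasure ν₂]
    (h₁ : ν₁ (Set.Icc (-1:ℝ) 1)ᶜ = 0) (h₂ : ν₂ (Set.Icc (-1:ℝ) 1)ᶜ = 0)
    (hmom : ∀ k : ℕ, ∫ t, t^k ∂ν₁ = ∫ t, t^k ∂ν₂) : ν₁ = ν₂ := by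
  -- polynomial integrals agree
  have hpoly : ∀ p : Polynomial ℝ, ∫ t, p.eval t ∂ν₁ = ∫ t, p.eval t ∂ν₂ := by
    intro p
    have hform : ∀ t : ℝ, p.eval t =
        ∑ i ∈ Finset.range (p.natDegree + 1), p.coeff i * t^i := fun t =>
      Polynomial.eval_eq_sum_range t
    have hintk : ∀ (ν : Measure ℝ) [IsProbabilityMeasure ν], ν (Set.Icc (-1:ℝ) 1)ᶜ = 0 →
        ∀ i : ℕ, Integrable (fun t : ℝ => p.coeff i * t^i) ν := by
      intro ν _ hν i
      exact integrable_of_IccNull ν hν (continuous_const.mul (continuous_pow i))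
    calc ∫ t, p.eval t ∂ν₁
        = ∑ i ∈ Finset.range (p.natDegree + 1), ∫ t, p.coeff i * t^i ∂ν₁ := by
          rw [← integral_finset_sum _ (fun i _ => hintk ν₁ h₁ i)]
          exact integral_congr_ae (Filter.Eventually.of_forall fun t => hform t)
      _ = ∑ i ∈ Finset.range (p.natDegree + 1), ∫ t, p.coeff i * t^i ∂ν₂ := by
          apply Finset.sum_congr rfl
          intro i _
          rw [integral_const_mul, integral_const_mul, hmom i]
      _ = ∫ t, p.eval t ∂ν₂ := by
          rw [← integral_finset_sum _ (fun i _ => hintk ν₂ h₂ i)]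
          exact (integral_congr_ae (Filter.Eventually.of_forall fun t => hform t)).symm
  -- bounded continuous real-valued integrals agree
  have hbc : ∀ g : ℝ → ℝ, Continuous g → ∫ t, g t ∂ν₁ = ∫ t, g t ∂ν₂ := by
    intro g hg
    have hi₁ := integrable_of_IccNull ν₁ h₁ hg
    have hi₂ := integrable_of_IccNull ν₂ h₂ hg
    set D := ∫ t, g t ∂ν₁ - ∫ t, g t ∂ν₂ with hD
    have habs : ∀ ε : ℝ, 0 < ε → |D| ≤ 2*ε := by
      intro ε hε
      obtain ⟨p, hp⟩ := exists_polynomial_near_of_continuousOn (-1) 1 g hg.continuousOn ε hε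
      have hpc : Continuous fun t : ℝ => p.eval t := p.continuous
      have hpi₁ := integrable_of_IccNull ν₁ h₁ hpc
      have hpi₂ := integrable_of_IccNull ν₂ h₂ hpc
      have hb : ∀ t ∈ Set.Icc (-1:ℝ) 1, |g t - p.eval t| ≤ ε := by
        intro t ht
        rw [abs_sub_comm]
        exact le_of_lt (hp t ht)
      have e₁ : |∫ t, (g t - p.eval t) ∂ν₁| ≤ ε :=
        abs_integral_le_of_IccNull ν₁ h₁ (hi₁.sub hpi₁) hb
      have e₂ : |∫ t, (g t - p.eval t) ∂ν₂| ≤ ε :=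
        abs_integral_le_of_IccNull ν₂ h₂ (hi₂.sub hpi₂) hb
      rw [integral_sub hi₁ hpi₁] at e₁
      rw [integral_sub hi₂ hpi₂] at e₂
      have hpol := hpoly p
      have hDe : D = ((∫ t, g t ∂ν₁) - ∫ t, p.eval t ∂ν₁)
          - ((∫ t, g t ∂ν₂) - ∫ t, p.eval t ∂ν₂) := by
        rw [hD, hpol]; ring
      rw [hDe]
      calc |((∫ t, g t ∂ν₁) - ∫ t, p.eval t ∂ν₁) - ((∫ t, g t ∂ν₂) - ∫ t, p.eval t ∂ν₂)|
          ≤ |(∫ t, g t ∂ν₁) - ∫ t, p.eval t ∂ν₁| + |(∫ t, g t ∂ν₂) - ∫ t, p.eval t ∂ν₂| :=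
            abs_sub _ _
        _ ≤ 2*ε := by linarith
    by_contra hne
    have hD0 : 0 < |D| := by
      rw [abs_pos, hD]
      exact sub_ne_zero_of_ne hne
    have := habs (|D|/4) (by positivity)
    linarith
  -- conclude
  apply ext_of_forall_lintegral_eq_of_IsFiniteMeasure
  intro f
  have hg : Continuous fun t : ℝ => (f t : ℝ) := NNReal.continuous_coe.comp f.continuous
  rw [lintegral_coe_eq_integral _ (integrable_of_IccNull ν₁ h₁ hg),
    lintegral_coe_eq_integral _ (integrable_of_IccNull ν₂ h₂ hg),
    hbc _ hg]

abbrev E3 : Type := EuclideanSpace ℝ (Fin 3)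

lemma inner_cont (u : E3) : Continuous fun x : E3 => ⟪x, u⟫ :=
  continuous_id.inner continuous_const

variable {μ : Measure E3} [IsProbabilityMeasure μ]

lemma ae_norm_one (hsupp : μ (Metric.sphere (0 : E3) 1) = 1) : ∀ᵐ x ∂μ, ‖x‖ = 1 := by
  rw [ae_iff]
  have hs : MeasurableSet (Metric.sphere (0:E3) 1) := Metric.isClosed_sphere.measurableSet
  have hc := measure_compl hs (measure_ne_top μ _)
  rw [hsupp, measure_univ, tsub_self] at hc
  convert hc using 2
  ext x
  simp [Metric.mem_sphere, dist_zero_right]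

lemma integrable_sphere_bdd (hsupp : μ (Metric.sphere (0 : E3) 1) = 1) {f : E3 → ℝ}
    (hf : Continuous f) (C : ℝ) (hC : ∀ x : E3, ‖x‖ = 1 → |f x| ≤ C) : Integrable f μ :=
  ⟨hf.aestronglyMeasurable, HasFiniteIntegral.of_bounded (C := C)
    (((ae_norm_one hsupp).mono fun x hx => by rw [Real.norm_eq_abs]; exact hC x hx))⟩

lemma map_inner_unit_eq
    (hinv : ∀ g : E3 ≃ₗᵢ[ℝ] E3, μ.map g = μ)
    {u u' : E3} (hu : ‖u‖ = 1) (hu' : ‖u'‖ = 1) :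
    μ.map (fun x => ⟪x, u⟫) = μ.map (fun x => ⟪x, u'⟫) := by
  set g : E3 ≃ₗᵢ[ℝ] E3 := Submodule.reflection (ℝ ∙ (u - u'))ᗮ with hgdef
  have hg : g u = u' := Submodule.reflection_sub (by rw [hu, hu'])
  have hcomp : (fun x : E3 => ⟪x, u'⟫) ∘ g = fun x : E3 => ⟪x, u⟫ := by
    funext x
    simp only [Function.comp_apply]
    rw [← hg, LinearIsometryEquiv.inner_map_map]
  calc μ.map (fun x => ⟪x, u⟫) = μ.map ((fun x : E3 => ⟪x, u'⟫) ∘ g) := by rw [hcomp]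
    _ = (μ.map g).map (fun x : E3 => ⟪x, u'⟫) :=
        (Measure.map_map (inner_cont u').measurable g.continuous.measurable).symm
    _ = μ.map (fun x : E3 => ⟪x, u'⟫) := by rw [hinv g]

lemma mom_unit (hsupp : μ (Metric.sphere (0 : E3) 1) = 1)
    (hinv : ∀ g : E3 ≃ₗᵢ[ℝ] E3, μ.map g = μ)
    {v u : E3} (hv : ‖v‖ = 1) (hu : ‖u‖ = 1) (k : ℕ) :
    ∫ x, ⟪x, u⟫^k ∂μ = ∫ x, ⟪x, v⟫^k ∂μ := by
  have h1 : ∀ w : E3, ∫ x, ⟪x, w⟫^k ∂μ = ∫ t, t^k ∂(μ.map (fun x => ⟪x, w⟫)) := by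
    intro w
    rw [integral_map (inner_cont w).measurable.aemeasurable
      ((continuous_pow k).aestronglyMeasurable)]
  rw [h1 u, h1 v, map_inner_unit_eq hinv hu hv]

lemma mom_rec (hsupp : μ (Metric.sphere (0 : E3) 1) = 1)
    (hinv : ∀ g : E3 ≃ₗᵢ[ℝ] E3, μ.map g = μ)
    {v : E3} (hv : ‖v‖ = 1) (n : ℕ) :
    2*π * (∫ x, ⟪x, v⟫^(2*n) ∂μ) =
      W n * ∑ k ∈ Finset.range (n+1), ((n.choose k : ℝ) * (-1)^k) * ∫ x, ⟪x, v⟫^(2*k) ∂μ := by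
  set e0 : E3 := EuclideanSpace.single (0 : Fin 3) (1:ℝ) with he0
  set e1 : E3 := EuclideanSpace.single (1 : Fin 3) (1:ℝ) with he1
  set e2 : E3 := EuclideanSpace.single (2 : Fin 3) (1:ℝ) with he2
  have hne : ∀ i : Fin 3, ‖EuclideanSpace.single i (1:ℝ)‖ = 1 := by
    intro i; rw [EuclideanSpace.norm_single]; norm_num
  have hinner01 : ⟪e0, e1⟫ = 0 := by
    rw [he0, he1, EuclideanSpace.inner_single_left]
    simp [EuclideanSpace.single_apply]
  -- the rotated unit vector
  set u : ℝ → E3 := fun α => Real.cos α • e0 + Real.sin α • e1 with hu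
  have hnu : ∀ α, ‖u α‖ = 1 := by
    intro α
    have h2 : ⟪u α, u α⟫ = 1 := by
      rw [hu]
      simp only [real_inner_add_add_self, real_inner_smul_left, real_inner_smul_right]
      rw [hinner01, real_inner_self_eq_norm_sq, real_inner_self_eq_norm_sq,
        he0, he1, hne 0, hne 1]
      simp only [one_pow, mul_one, mul_zero]
      nlinarith [Real.sin_sq_add_cos_sq α]
    rw [real_inner_self_eq_norm_sq] at h2
    nlinarith [norm_nonneg (u α)]
  have hinner_u : ∀ (α : ℝ) (x : E3),
      ⟪x, u α⟫ = Real.cos α * ⟪x, e0⟫ + Real.sin α * ⟪x, e1⟫ := by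
    intro α x
    rw [hu]
    simp only [inner_add_right, real_inner_smul_right]
  -- Parseval on the sphere
  have hpars : ∀ x : E3, ‖x‖ = 1 → ⟪x, e0⟫^2 + ⟪x, e1⟫^2 = 1 - ⟪x, e2⟫^2 := by
    intro x hx
    have hco : ∀ i : Fin 3, ⟪x, EuclideanSpace.single i (1:ℝ)⟫ = x i := by
      intro i
      rw [EuclideanSpace.inner_single_right]
      simp
    have hsum : (x 0)^2 + (x 1)^2 + (x 2)^2 = 1 := by
      have h1 : ‖x‖^2 = 1 := by rw [hx]; norm_num
      rw [EuclideanSpace.norm_eq] at h1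
      rw [Real.sq_sqrt (by positivity)] at h1
      rw [Fin.sum_univ_three] at h1
      simpa [Real.norm_eq_abs, sq_abs] using h1
    rw [he0, he1, he2, hco 0, hco 1, hco 2]
    linarith
  -- notation for moments
  set m : ℕ → ℝ := fun k => ∫ x, ⟪x, v⟫^k ∂μ with hm
  have hmom_u : ∀ α, ∫ x, ⟪x, u α⟫^(2*n) ∂μ = m (2*n) := fun α =>
    mom_unit hsupp hinv hv (hnu α) (2*n)
  -- Fubini
  set μ₁ : Measure ℝ := volume.restrict (Set.Ioc (0:ℝ) (2*π)) with hμ₁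
  haveI : IsFiniteMeasure μ₁ := by
    constructor
    rw [hμ₁, Measure.restrict_apply_univ, Real.volume_Ioc]
    exact ENNReal.ofReal_lt_top
  set F : ℝ → E3 → ℝ := fun α x => (Real.cos α * ⟪x, e0⟫ + Real.sin α * ⟪x, e1⟫)^(2*n) with hF
  have hFcont : Continuous (Function.uncurry F) := by
    apply Continuous.pow
    exact ((Real.continuous_cos.comp continuous_fst).mul
        ((inner_cont e0).comp continuous_snd)).add
      ((Real.continuous_sin.comp continuous_fst).mul ((inner_cont e1).comp continuous_snd))
  have hprod_ae : ∀ᵐ p ∂(μ₁.prod μ), ‖p.2‖ = 1 := by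
    rw [ae_iff]
    have : {p : ℝ × E3 | ¬ ‖p.2‖ = 1} = Set.univ ×ˢ {x : E3 | ¬ ‖x‖ = 1} := by
      ext p; simp
    rw [this, Measure.prod_prod]
    have h0 : μ {x : E3 | ¬ ‖x‖ = 1} = 0 := by
      have := ae_norm_one hsupp
      rwa [ae_iff] at this
    rw [h0, mul_zero]
  have hInt : Integrable (Function.uncurry F) (μ₁.prod μ) := by
    refine ⟨hFcont.aestronglyMeasurable, HasFiniteIntegral.of_bounded (C := 2^(2*n)) ?_⟩
    filter_upwards [hprod_ae] with p hp
    rw [Function.uncurry, hF]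
    simp only [Real.norm_eq_abs, abs_pow]
    apply pow_le_pow_left₀ (abs_nonneg _)
    calc |Real.cos p.1 * ⟪p.2, e0⟫ + Real.sin p.1 * ⟪p.2, e1⟫|
        ≤ |Real.cos p.1 * ⟪p.2, e0⟫| + |Real.sin p.1 * ⟪p.2, e1⟫| := abs_add_le _ _
      _ ≤ 1 * (‖p.2‖ * ‖e0‖) + 1 * (‖p.2‖ * ‖e1‖) := by
          rw [abs_mul, abs_mul]
          gcongr
          · exact Real.abs_cos_le_one p.1
          · exact abs_real_inner_le_norm _ _
          · exact Real.abs_sin_le_one p.1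
          · exact abs_real_inner_le_norm _ _
      _ = 2 := by rw [hp, he0, he1, hne 0, hne 1]; ring
  have hswap := integral_integral_swap hInt
  -- LHS of swap
  have hL : (∫ α, ∫ x, F α x ∂μ ∂μ₁) = 2*π * m (2*n) := by
    have hFe : ∀ α, (∫ x, F α x ∂μ) = m (2*n) := by
      intro α
      rw [hF]
      simp only
      rw [← hmom_u α]
      apply integral_congr_ae
      apply Filter.Eventually.of_forall
      intro x
      simp only
      rw [hinner_u α x]
    rw [integral_congr_ae (Filter.Eventually.of_forall hFe), integral_const]
    simp only [smul_eq_mul]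
    rw [hμ₁, Measure.real, Measure.restrict_apply_univ, Real.volume_Ioc]
    rw [ENNReal.toReal_ofReal (by linarith [pi_pos])]
    ring
  -- RHS of swap : inner circle integral
  have hR : (∫ x, ∫ α, F α x ∂μ₁ ∂μ) = ∫ x, (⟪x,e0⟫^2 + ⟪x,e1⟫^2)^n * W n ∂μ := by
    apply integral_congr_ae
    apply Filter.Eventually.of_forall
    intro x
    have : (∫ α, F α x ∂μ₁) = ∫ α in (0:ℝ)..(2*π), F α x := by
      rw [intervalIntegral.integral_of_le (by linarith [pi_pos])]
    simp only
    rw [this, hF]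
    rw [show (∫ α in (0:ℝ)..(2*π), (Real.cos α * ⟪x,e0⟫ + Real.sin α * ⟪x,e1⟫)^(2*n))
      = ∫ α in (0:ℝ)..(2*π), (⟪x,e0⟫ * Real.cos α + ⟪x,e1⟫ * Real.sin α)^(2*n) from
      intervalIntegral.integral_congr (fun α _ => by ring)]
    exact circle_avg _ _ n
  -- combine and expand
  have hmain : 2*π * m (2*n) = ∫ x, (⟪x,e0⟫^2 + ⟪x,e1⟫^2)^n * W n ∂μ := by
    rw [← hL, ← hR, hswap]
  rw [hmain]
  have hsub : ∫ x, (⟪x,e0⟫^2 + ⟪x,e1⟫^2)^n * W n ∂μ = ∫ x, (1 - ⟪x,e2⟫^2)^n * W n ∂μ := by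
    apply integral_congr_ae
    filter_upwards [ae_norm_one hsupp] with x hx
    rw [hpars x hx]
  rw [hsub]
  have hexp : ∀ x : E3, (1 - ⟪x,e2⟫^2)^n * W n =
      ∑ k ∈ Finset.range (n+1), (((n.choose k : ℝ) * (-1)^k) * ⟪x,e2⟫^(2*k)) * W n := by
    intro x
    rw [expand_pow, Finset.sum_mul]
  rw [integral_congr_ae (Filter.Eventually.of_forall hexp)]
  have hintk : ∀ k : ℕ, Integrable (fun x : E3 =>
      (((n.choose k : ℝ) * (-1)^k) * ⟪x,e2⟫^(2*k)) * W n) μ := by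
    intro k
    apply integrable_sphere_bdd hsupp
    · exact (continuous_const.mul ((inner_cont e2).pow (2*k))).mul continuous_const
    · intro x hx
      calc |(((n.choose k : ℝ) * (-1)^k) * ⟪x,e2⟫^(2*k)) * W n|
          = ((n.choose k : ℝ) * |⟪x,e2⟫|^(2*k)) * |W n| := by
            rw [abs_mul, abs_mul, abs_mul, abs_pow, abs_pow, abs_neg, abs_one, one_pow, mul_one,
              Nat.abs_cast]
        _ ≤ ((n.choose k : ℝ) * 1^(2*k)) * |W n| := by
            gcongr
            calc |⟪x,e2⟫| ≤ ‖x‖ * ‖e2‖ := abs_real_inner_le_norm _ _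
              _ = 1 := by rw [hx, he2, hne 2]; ring
        _ = (n.choose k : ℝ) * |W n| := by ring
  rw [integral_finset_sum _ (fun k _ => hintk k)]
  rw [Finset.mul_sum]
  apply Finset.sum_congr rfl
  intro k _
  rw [integral_mul_const, integral_const_mul]
  have : ∫ x, ⟪x,e2⟫^(2*k) ∂μ = m (2*k) := mom_unit hsupp hinv hv (by rw [he2]; exact hne 2) (2*k)
  rw [this]
  ring

lemma mom_odd (hinv : ∀ g : E3 ≃ₗᵢ[ℝ] E3, μ.map g = μ)
    {v : E3} {k : ℕ} (hk : Odd k) : ∫ x, ⟪x, v⟫^k ∂μ = 0 := by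
  set g : E3 ≃ₗᵢ[ℝ] E3 := LinearIsometryEquiv.neg ℝ with hg
  have h1 : ∫ x, ⟪x, v⟫^k ∂μ = ∫ x, ⟪-x, v⟫^k ∂μ := by
    conv_lhs => rw [← hinv g]
    rw [integral_map g.continuous.measurable.aemeasurable (f := fun x : E3 => ⟪x, v⟫^k)
      (((inner_cont v).pow k).aestronglyMeasurable)]
    apply integral_congr_ae
    apply Filter.Eventually.of_forall
    intro x
    simp [hg]
  have h2 : ∀ x : E3, ⟪-x, v⟫^k = -(⟪x, v⟫^k) := by
    intro x
    rw [inner_neg_left]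
    exact hk.neg_pow _
  rw [integral_congr_ae (Filter.Eventually.of_forall h2), integral_neg] at h1
  linarith

theorem map_inner_eq_unif (hsupp : μ (Metric.sphere (0 : E3) 1) = 1)
    (hinv : ∀ g : E3 ≃ₗᵢ[ℝ] E3, μ.map g = μ)
    {v : E3} (hv : ‖v‖ = 1) :
    μ.map (fun x => ⟪x, v⟫) = unif := by
  have hmeas := (inner_cont v).measurable
  haveI : IsProbabilityMeasure (μ.map (fun x => ⟪x, v⟫)) :=
    Measure.isProbabilityMeasure_map hmeas.aemeasurable
  have hνIcc : (μ.map (fun x => ⟪x, v⟫)) (Set.Icc (-1:ℝ) 1)ᶜ = 0 := by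
    rw [Measure.map_apply hmeas measurableSet_Icc.compl]
    have hsub : (fun x : E3 => ⟪x,v⟫) ⁻¹' (Set.Icc (-1:ℝ) 1)ᶜ ⊆ {x : E3 | ¬ ‖x‖ = 1} := by
      intro x hx
      simp only [Set.mem_preimage, Set.mem_compl_iff, Set.mem_Icc, not_and_or, not_le] at hx
      simp only [Set.mem_setOf_eq]
      intro hnx
      have : |⟪x, v⟫| ≤ 1 := by
        calc |⟪x, v⟫| ≤ ‖x‖ * ‖v‖ := abs_real_inner_le_norm _ _
          _ = 1 := by rw [hnx, hv]; ring
      rw [abs_le] at this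
      rcases hx with h | h <;> linarith [this.1, this.2]
    refine measure_mono_null hsub ?_
    have := ae_norm_one hsupp
    rwa [ae_iff] at this
  have hmom_ν : ∀ k : ℕ, ∫ t, t^k ∂(μ.map (fun x => ⟪x, v⟫)) = ∫ x, ⟪x, v⟫^k ∂μ := by
    intro k
    rw [integral_map hmeas.aemeasurable ((continuous_pow k).aestronglyMeasurable)]
  -- all moments agree with the uniform ones
  have hml : ∀ k : ℕ, (∫ x, ⟪x, v⟫^k ∂μ) = l k := by
    intro k
    induction k using Nat.strong_induction_on with
    | _ k ih =>
    rcases Nat.even_or_odd k with hk | hk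
    · obtain ⟨n, hn⟩ := hk
      have hk2 : k = 2*n := by omega
      subst hk2
      rcases Nat.eq_zero_or_pos n with h0 | hpos
      · subst h0
        simp only [mul_zero, pow_zero]
        rw [integral_const, Measure.real, measure_univ]
        have := l_even 0
        simp only [mul_zero, Nat.cast_zero] at this
        rw [this]
        norm_num
      · have hrecm := mom_rec hsupp hinv hv n
        have hrecl : 2*π * l (2*n) =
            W n * ∑ k ∈ Finset.range (n+1), ((n.choose k:ℝ)*(-1)^k) * l (2*k) := by
          have hsum : ∑ k ∈ Finset.range (n+1), ((n.choose k:ℝ)*(-1)^k) * l (2*k)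
              = ∑ k ∈ Finset.range (n+1), (n.choose k:ℝ)*(-1)^k / (2*(k:ℝ)+1) := by
            apply Finset.sum_congr rfl
            intro j _
            rw [l_even]
            ring
          rw [hsum, ← J_sum, l_even]
          have h1 : (2*(n:ℝ)+1) ≠ 0 := by positivity
          field_simp
          linear_combination (-1 : ℝ) * WJ n
        rw [Finset.sum_range_succ] at hrecm hrecl
        rw [Nat.choose_self, Nat.cast_one, one_mul] at hrecm hrecl
        have hS : ∑ k ∈ Finset.range n, ((n.choose k:ℝ)*(-1)^k) * (∫ x, ⟪x,v⟫^(2*k) ∂μ)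
            = ∑ k ∈ Finset.range n, ((n.choose k:ℝ)*(-1)^k) * l (2*k) := by
          apply Finset.sum_congr rfl
          intro j hj
          rw [ih (2*j) (by rw [Finset.mem_range] at hj; omega)]
        rw [hS] at hrecm
        have hW0 := W_pos n
        have hW1 := W_lt n hpos
        rcases Nat.even_or_odd n with he | ho
        · rw [he.neg_one_pow] at hrecm hrecl
          have hfac : (2*π - W n) * ((∫ x, ⟪x,v⟫^(2*n) ∂μ) - l (2*n)) = 0 := by
            linear_combination hrecm - hrecl
          rcases mul_eq_zero.mp hfac with h | h
          · linarith
          · linarith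
        · rw [ho.neg_one_pow] at hrecm hrecl
          have hfac : (2*π + W n) * ((∫ x, ⟪x,v⟫^(2*n) ∂μ) - l (2*n)) = 0 := by
            linear_combination hrecm - hrecl
          rcases mul_eq_zero.mp hfac with h | h
          · linarith [pi_pos]
          · linarith
    · obtain ⟨j, hj⟩ := hk
      subst hj
      rw [mom_odd hinv ⟨j, rfl⟩, l_odd j]
  exact eq_of_moments _ _ hνIcc unif_compl_Icc (fun k => by rw [hmom_ν k, hml k, l])

end ContactAux

open ContactAux

/-- Lemma 1: the CDF of the contact angle. For `N ≥ 1` satellites `X₁, …, X_N`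
independently and uniformly distributed on the unit sphere of `ℝ³` (product of `N`
copies of the rotation-invariant probability measure `μ` concentrated on the sphere),
the contact angle `θ₀ = min_i arccos ⟪Xᵢ, v⟫` to a fixed unit direction `v` satisfies
`P[θ₀ ≤ θ] = 1 − ((1 + cos θ)/2)^N` for `θ ∈ [0, π]`. -/
theorem contactAngle_cdf
    (N : ℕ) (hN : 1 ≤ N)
    (μ : Measure (EuclideanSpace ℝ (Fin 3))) [IsProbabilityMeasure μ]
    (hsupp : μ (Metric.sphere (0 : EuclideanSpace ℝ (Fin 3)) 1) = 1)
    (hinv : ∀ g : EuclideanSpace ℝ (Fin 3) ≃ₗᵢ[ℝ] EuclideanSpace ℝ (Fin 3),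
      μ.map g = μ)
    (v : EuclideanSpace ℝ (Fin 3)) (hv : ‖v‖ = 1)
    (θ : ℝ) (hθ : θ ∈ Set.Icc (0 : ℝ) π) :
    Measure.pi (fun _ : Fin N => μ)
        {X : Fin N → EuclideanSpace ℝ (Fin 3) |
          (⨅ i : Fin N, Real.arccos ⟪X i, v⟫) ≤ θ} =
      ENNReal.ofReal (1 - ((1 + Real.cos θ) / 2) ^ N) := by
  obtain ⟨hθ0, hθπ⟩ := hθ
  haveI : Nonempty (Fin N) := Fin.pos_iff_nonempty.mp (by omega)
  set c : ℝ := Real.cos θ with hc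
  have hc1 : -1 ≤ c := Real.neg_one_le_cos θ
  have hc2 : c ≤ 1 := Real.cos_le_one θ
  set A : Set E3 := {x : E3 | θ < Real.arccos ⟪x, v⟫} with hA
  set S : Set (Fin N → E3) :=
    {X : Fin N → E3 | (⨅ i : Fin N, Real.arccos ⟪X i, v⟫) ≤ θ} with hS
  have hcompl : Sᶜ = Set.pi Set.univ (fun _ : Fin N => A) := by
    ext X
    simp only [hS, Set.mem_compl_iff, Set.mem_setOf_eq, not_le, Set.mem_pi, Set.mem_univ,
      forall_true_left, hA]
    constructor
    · intro h i
      exact lt_of_lt_of_le h (ciInf_le (Set.finite_range _).bddBelow i)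
    · intro h
      obtain ⟨i₀, hi₀⟩ := Finite.exists_min (fun i : Fin N => Real.arccos ⟪X i, v⟫)
      exact lt_of_lt_of_le (h i₀) (le_ciInf hi₀)
  -- value of μ A
  have hmeas := (inner_cont v).measurable
  have hAval : μ A = ENNReal.ofReal ((1 + c)/2) := by
    have hAae : A =ᵐ[μ] {x : E3 | ⟪x,v⟫ < c} := by
      rw [Filter.eventuallyEq_set]
      filter_upwards [ae_norm_one hsupp] with x hx
      have habs : |⟪x, v⟫| ≤ 1 := by
        calc |⟪x, v⟫| ≤ ‖x‖ * ‖v‖ := abs_real_inner_le_norm _ _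
          _ = 1 := by rw [hx, hv]; ring
      rw [abs_le] at habs
      simp only [hA, Set.mem_setOf_eq]
      constructor
      · intro hlt
        by_contra hge
        push_neg at hge
        have h1 : Real.arccos ⟪x,v⟫ ≤ Real.arccos c := by
          rw [Real.arccos_eq_pi_div_two_sub_arcsin, Real.arccos_eq_pi_div_two_sub_arcsin]
          have := Real.monotone_arcsin hge
          linarith
        rw [Real.arccos_cos hθ0 hθπ] at h1
        linarith
      · intro hlt
        have h1 : Real.arccos c < Real.arccos ⟪x,v⟫ :=
          Real.strictAntiOn_arccos ⟨habs.1, habs.2⟩ ⟨hc1, hc2⟩ hlt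
        rwa [Real.arccos_cos hθ0 hθπ] at h1
    rw [measure_congr hAae]
    have h2 : {x : E3 | ⟪x,v⟫ < c} = (fun x : E3 => ⟪x,v⟫) ⁻¹' (Set.Iio c) := rfl
    rw [h2, ← Measure.map_apply hmeas measurableSet_Iio,
      map_inner_eq_unif hsupp hinv hv, unif, Measure.smul_apply,
      Measure.restrict_apply measurableSet_Iio]
    have h3 : Set.Iio c ∩ Set.Icc (-1:ℝ) 1 = Set.Ico (-1:ℝ) c := by
      ext t
      simp only [Set.mem_inter_iff, Set.mem_Iio, Set.mem_Icc, Set.mem_Ico]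
      constructor
      · rintro ⟨h, h', _⟩; exact ⟨h', h⟩
      · rintro ⟨h, h'⟩; exact ⟨h', h, by linarith⟩
    rw [h3, Real.volume_Ico, smul_eq_mul]
    rw [show ((1+c)/2 : ℝ) = 2⁻¹ * (c - (-1)) by ring,
      ENNReal.ofReal_mul (by norm_num)]
    congr 1
    rw [show ((2:ℝ)⁻¹) = (2:ℝ)⁻¹ from rfl, ENNReal.ofReal_inv_of_pos (by norm_num)]
    norm_num
  -- measurability
  have hAmeas : MeasurableSet A :=
    measurableSet_lt measurable_const
      ((Real.continuous_arccos.comp (inner_cont v)).measurable)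
  have hpimeas : MeasurableSet (Set.pi Set.univ (fun _ : Fin N => A)) :=
    MeasurableSet.univ_pi (fun _ => hAmeas)
  have hpi : (Measure.pi fun _ : Fin N => μ) (Set.pi Set.univ fun _ => A)
      = (ENNReal.ofReal ((1+c)/2))^N := by
    rw [Measure.pi_pi]
    simp [hAval]
  have hScompl : S = (Set.pi Set.univ (fun _ : Fin N => A))ᶜ := by
    rw [← hcompl, compl_compl]
  rw [hScompl, prob_compl_eq_one_sub hpimeas, hpi]
  have hp0 : (0:ℝ) ≤ (1+c)/2 := by linarith
  rw [ENNReal.ofReal_sub _ (pow_nonneg hp0 N), ENNReal.ofReal_one, ENNReal.ofReal_pow hp0]
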